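/- Let x, y ∈ ℝ^d and let p, q be unit vectors with |⟨p,q⟩| ≤ 1/√2. Suppose the line ℓ_{x,p,∞} intersects the closed ball B(y + τ₁·q, 2) for some τ₁ ∈ ℝ. Then for every τ₂ with |τ₁ − τ₂| ≥ 12, the line ℓ_{x,p,∞} is disjoint from the closed ball B(y + τ₂·q, 2); in fact dist(ℓ_{x,p,∞}, y + τ₂·q) ≥ 6. -/

import Mathlib

open Real

private lemma sq_ge_aux (a : ℝ) (h0 : 0 ≤ a) (h64 : 64 ≤ a ^ 2) : 8 ≤ a := by
  nlinarith

/-- If a line hits a ball of radius 2 centered at `y + τ₁ • q` on another line with nearly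
orthogonal unit direction, then it misses every ball of radius 2 centered at `y + τ₂ • q`
with `|τ₁ − τ₂| ≥ 12`; in fact the distance from the line to that center is at least 6. -/
theorem line_misses_far_balls (d : ℕ) (x y p q : EuclideanSpace ℝ (Fin d))
    (hp : ‖p‖ = 1) (hq : ‖q‖ = 1) (hpq : |(inner ℝ p q : ℝ)| ≤ 1 / Real.sqrt 2)
    (τ₁ : ℝ) (hhit : ∃ t : ℝ, (x + t • p) ∈ Metric.closedBall (y + τ₁ • q) 2) :
    ∀ τ₂ : ℝ, |τ₁ - τ₂| ≥ 12 →
      {z | ∃ t : ℝ, z = x + t • p} ∩ Metric.closedBall (y + τ₂ • q) 2 = ∅ ∧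
        Metric.infDist (y + τ₂ • q) {z | ∃ t : ℝ, z = x + t • p} ≥ 6 := by
  obtain ⟨t₁, ht₁⟩ := hhit
  intro τ₂ hτ
  have hv : ‖x + t₁ • p - (y + τ₁ • q)‖ ≤ 2 := by
    simpa [Metric.mem_closedBall, dist_eq_norm] using ht₁
  have hr0 : (0:ℝ) < Real.sqrt 2 := by positivity
  have hr2 : (Real.sqrt 2) ^ 2 = 2 := Real.sq_sqrt (by norm_num)
  have key : ∀ t : ℝ, 6 ≤ ‖x + t • p - (y + τ₂ • q)‖ := by
    intro t
    set v := x + t₁ • p - (y + τ₁ • q) with hvdef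
    set s := t - t₁ with hsdef
    set τ := τ₁ - τ₂ with hτdef
    have hdecomp : x + t • p - (y + τ₂ • q) = v + (s • p + τ • q) := by
      rw [hvdef, hsdef, hτdef]
      module
    rw [hvdef] at hv
    clear_value v s τ
    have hw2 : ‖s • p + τ • q‖ ^ 2 = s ^ 2 + 2 * (s * τ * (inner ℝ p q : ℝ)) + τ ^ 2 := by
      rw [norm_add_sq_real, norm_smul, norm_smul, hp, hq, real_inner_smul_left,
        real_inner_smul_right]
      simp [mul_pow, sq_abs, mul_assoc]
    have hip : |s * τ * (inner ℝ p q : ℝ)| ≤ |s| * |τ| * (1 / Real.sqrt 2) := by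
      rw [abs_mul, abs_mul]
      gcongr
    have hτ12 : 12 ≤ |τ| := hτ
    have hlow : 64 ≤ ‖s • p + τ • q‖ ^ 2 := by
      rw [hw2]
      have h1 : -( |s| * |τ| * (1 / Real.sqrt 2)) ≤ s * τ * (inner ℝ p q : ℝ) :=
        neg_le_of_abs_le hip
      have hs2 : s ^ 2 = |s| ^ 2 := (sq_abs s).symm
      have hτ2 : τ ^ 2 = |τ| ^ 2 := (sq_abs τ).symm
      rw [hs2, hτ2]
      have h3 : 2 * (|s| * |τ| * (1 / Real.sqrt 2)) = Real.sqrt 2 * |s| * |τ| := by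
        field_simp
        linear_combination (-|s|) * hr2
      have hsq : 0 ≤ 2 * |s| ^ 2 - 2 * (Real.sqrt 2 * |s| * |τ|) + |τ| ^ 2 := by
        nlinarith [sq_nonneg (|s| * Real.sqrt 2 - |τ|)]
      have h4 : -(Real.sqrt 2 * |s| * |τ|) ≤ 2 * (s * τ * (inner ℝ p q : ℝ)) := by
        nlinarith [h1, h3]
      have h5 : (144:ℝ) ≤ |τ| ^ 2 := by nlinarith [sq_nonneg (|τ| - 12)]
      linarith
    have hw : 8 ≤ ‖s • p + τ • q‖ := sq_ge_aux _ (norm_nonneg _) hlow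
    have htri : ‖s • p + τ • q‖ ≤ ‖v + (s • p + τ • q)‖ + ‖v‖ := by
      have h := norm_sub_le (v + (s • p + τ • q)) v
      rwa [add_sub_cancel_left] at h
    have hv' : ‖v‖ ≤ 2 := by rw [hvdef]; exact hv
    rw [hdecomp]
    linarith only [hw, hv', htri]
  constructor
  · ext z
    simp only [Set.mem_inter_iff, Set.mem_setOf_eq, Metric.mem_closedBall, Set.mem_empty_iff_false,
      iff_false, not_and]
    rintro ⟨t, rfl⟩ hball
    rw [dist_eq_norm] at hball
    have := key t
    linarith
  · have hne : {z : EuclideanSpace ℝ (Fin d) | ∃ t : ℝ, z = x + t • p}.Nonempty :=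
      ⟨x + 0 • p, 0, rfl⟩
    by_contra hcon
    rw [ge_iff_le, not_le] at hcon
    obtain ⟨z, ⟨t, rfl⟩, hz⟩ := (Metric.infDist_lt_iff hne).mp hcon
    rw [dist_eq_norm, ← norm_neg, neg_sub] at hz
    have := key t
    linarith
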